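/- arXiv:1404.2325 — 6 statements merged into one kernel-verified Lean document; each statement's English description precedes it below -/
import Mathlib

section
/- Let n ∈ ℕ, let D ⊆ ℝⁿ be a compact set, let Φ : ℝⁿ → ℝⁿ be continuous, and let V : ℝⁿ → ℝ be continuously differentiable such that V(x) ≥ 0 for all x ∈ D and ⟨∇V(x), Φ(x)⟩ < 0 for every x ∈ D with V(x) > 0. Then for every differentiable trajectory x : [0,∞) → ℝⁿ satisfying x'(t) = Φ(x(t)) and x(t) ∈ D for all t ≥ 0, the value V(x(t)) tends to 0 as t → ∞. -/
open scoped RealInnerProductSpace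

/-- Lyapunov stability theorem (single choice set): if `V` is a continuously
differentiable nonnegative function on the compact invariant set `D` whose
gradient has negative inner product with the vector field `Φ` wherever `V > 0`,
then along any trajectory of `Φ` staying in `D`, the value of `V` tends to `0`. -/
theorem stmt0 (n : ℕ) (D : Set (EuclideanSpace ℝ (Fin n))) (hD : IsCompact D)
    (Φ : EuclideanSpace ℝ (Fin n) → EuclideanSpace ℝ (Fin n)) (hΦ : Continuous Φ)
    (V : EuclideanSpace ℝ (Fin n) → ℝ) (hV : ContDiff ℝ 1 V)
    (hVnonneg : ∀ x ∈ D, 0 ≤ V x)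
    (hdesc : ∀ x ∈ D, 0 < V x → ⟪gradient V x, Φ x⟫ < 0)
    (x : ℝ → EuclideanSpace ℝ (Fin n))
    (hx : ∀ t : ℝ, 0 ≤ t → HasDerivAt x (Φ (x t)) t)
    (hxD : ∀ t : ℝ, 0 ≤ t → x t ∈ D) :
    Filter.Tendsto (fun t => V (x t)) Filter.atTop (nhds 0) := by
  set g : ℝ → ℝ := fun t => V (x t) with hgdef
  have hVdiff : ∀ y, DifferentiableAt ℝ V y := fun y =>
    (hV.differentiable one_ne_zero).differentiableAt
  have hg' : ∀ t, 0 ≤ t → HasDerivAt g (⟪gradient V (x t), Φ (x t)⟫) t := by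
    intro t ht
    have h1 := ((hVdiff (x t)).hasGradientAt).hasFDerivAt.comp_hasDerivAt t (hx t ht)
    have h2 : HasDerivAt g _ t := h1
    simpa [InnerProductSpace.toDual_apply_apply] using h2
  have hg0 : ∀ t, 0 ≤ t → 0 ≤ g t := fun t ht => hVnonneg _ (hxD t ht)
  -- g is antitone on [0, ∞)
  have hcont : ContinuousOn g (Set.Ici 0) := fun t ht =>
    (hg' t ht).continuousAt.continuousWithinAt
  have hdiff : DifferentiableOn ℝ g (interior (Set.Ici (0:ℝ))) := by
    rw [interior_Ici]
    exact fun t ht => ((hg' t ht.le).differentiableAt).differentiableWithinAt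
  have hderiv_nonpos : ∀ t ∈ interior (Set.Ici (0:ℝ)), deriv g t ≤ 0 := by
    rw [interior_Ici]
    intro t ht
    rw [(hg' t ht.le).deriv]
    rcases lt_or_eq_of_le (hg0 t ht.le) with hpos | hzero
    · exact (hdesc _ (hxD t ht.le) hpos).le
    · have hmin : IsLocalMin g t := by
        filter_upwards [isOpen_Ioi.eventually_mem ht] with s hs
        rw [← hzero]; exact hg0 s (le_of_lt hs)
      rw [hmin.hasDerivAt_eq_zero (hg' t ht.le)]
  have hanti : AntitoneOn g (Set.Ici 0) :=
    antitoneOn_of_deriv_nonpos (convex_Ici 0) hcont hdiff hderiv_nonpos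
  -- the shifted function h
  set h : ℝ → ℝ := fun t => g (max t 0) with hhdef
  have hh_anti : Antitone h := fun a b hab =>
    hanti (le_max_right a 0) (le_max_right b 0) (max_le_max hab le_rfl)
  have hbdd : BddBelow (Set.range h) := ⟨0, by
    rintro _ ⟨t, rfl⟩; exact hg0 _ (le_max_right t 0)⟩
  set L : ℝ := ⨅ t, h t with hLdef
  have hhL : Filter.Tendsto h Filter.atTop (nhds L) :=
    tendsto_atTop_ciInf hh_anti hbdd
  have hL0 : 0 ≤ L := le_ciInf fun t => hg0 _ (le_max_right t 0)
  have hLle : ∀ t, 0 ≤ t → L ≤ g t := by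
    intro t ht
    have h1 : L ≤ h t := ciInf_le hbdd t
    have h2 : h t = g t := by rw [hhdef]; simp [max_eq_left ht]
    linarith
  -- L = 0
  have hLzero : L = 0 := by
    by_contra hL
    have hLpos : 0 < L := lt_of_le_of_ne hL0 (Ne.symm hL)
    set K : Set (EuclideanSpace ℝ (Fin n)) := D ∩ V ⁻¹' Set.Ici L with hKdef
    have hKcomp : IsCompact K := hD.inter_right (isClosed_Ici.preimage hV.continuous)
    have hKne : K.Nonempty := ⟨x 0, hxD 0 le_rfl, hLle 0 le_rfl⟩
    have hgradcont : Continuous (fun y => gradient V y) := by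
      have : Continuous (fun y => fderiv ℝ V y) := hV.continuous_fderiv one_ne_zero
      exact ((InnerProductSpace.toDual ℝ _).symm.continuous.comp this)
    have hfcont : Continuous (fun y => ⟪gradient V y, Φ y⟫) :=
      hgradcont.inner hΦ
    obtain ⟨y₀, hy₀K, hy₀max⟩ := hKcomp.exists_isMaxOn hKne hfcont.continuousOn
    have hfneg : ⟪gradient V y₀, Φ y₀⟫ < 0 :=
      hdesc _ hy₀K.1 (lt_of_lt_of_le hLpos hy₀K.2)
    set ε : ℝ := -⟪gradient V y₀, Φ y₀⟫ with hεdef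
    have hε : 0 < ε := by simpa [hεdef] using hfneg
    have hxK : ∀ t, 0 ≤ t → x t ∈ K := fun t ht => ⟨hxD t ht, hLle t ht⟩
    -- φ t = g t + ε t is antitone on [0,∞)
    set φ : ℝ → ℝ := fun t => g t + ε * t with hφdef
    have hφ' : ∀ t, 0 ≤ t → HasDerivAt φ (⟪gradient V (x t), Φ (x t)⟫ + ε) t := by
      intro t ht
      have h2 : HasDerivAt φ _ t := (hg' t ht).add ((hasDerivAt_id t).const_mul ε)
      simpa using h2
    have hφanti : AntitoneOn φ (Set.Ici 0) := by
      apply antitoneOn_of_deriv_nonpos (convex_Ici 0)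
      · exact fun t ht => ((hφ' t ht).continuousAt).continuousWithinAt
      · rw [interior_Ici]
        exact fun t ht => ((hφ' t ht.le).differentiableAt).differentiableWithinAt
      · rw [interior_Ici]
        intro t ht
        rw [(hφ' t ht.le).deriv]
        have h1 : ⟪gradient V (x t), Φ (x t)⟫ ≤ ⟪gradient V y₀, Φ y₀⟫ :=
          hy₀max (hxK t ht.le)
        have h2 : ⟪gradient V y₀, Φ y₀⟫ = -ε := by rw [hεdef]; ring
        linarith
    set T : ℝ := g 0 / ε + 1 with hTdef
    have hT0 : 0 ≤ T := by
      have h1 : 0 ≤ g 0 / ε := div_nonneg (hg0 0 le_rfl) hε.le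
      rw [hTdef]; linarith
    have hmono : φ T ≤ φ 0 := hφanti Set.self_mem_Ici hT0 hT0
    have hεT : ε * T = g 0 + ε := by
      rw [hTdef]; field_simp
    have hφT : g T + ε * T ≤ g 0 + ε * 0 := hmono
    rw [hεT] at hφT
    linarith [hg0 T hT0, hε]
  -- conclude
  rw [hLzero] at hhL
  refine hhL.congr' ?_
  filter_upwards [Filter.eventually_ge_atTop (0:ℝ)] with t ht
  show g (max t 0) = g t
  rw [max_eq_left ht]
end

section
/- Let C be a finite set, let X : C → ℝ with X_j ≥ 0 for all j ∈ C, and let p : C → ℝ. Define W_j = Σ_{k ∈ C} ((p_j − p_k)₊)². Then Σ_{j ∈ C} W_j · Φ_j(X,p) ≤ 0, and the inequality is strict whenever X is not a Wardrop equilibrium for prices p (i.e., whenever there exist j, k ∈ C with X_j > 0 and p_j > p_k). -/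
/-- The adjustment dynamics vector field:
`Φ_j(X,p) = Σ_k [X_k (p_k - p_j)₊ - X_j (p_j - p_k)₊]`. -/
def Phi {ι : Type*} [Fintype ι] (X p : ι → ℝ) (j : ι) : ℝ :=
  ∑ k, (X k * max (p k - p j) 0 - X j * max (p j - p k) 0)

private lemma Wmono {ι : Type*} [Fintype ι] (p : ι → ℝ) {j k : ι} (h : p k ≤ p j) :
    (∑ m, (max (p k - p m) 0) ^ 2) ≤ ∑ m, (max (p j - p m) 0) ^ 2 := by
  apply Finset.sum_le_sum
  intro m _
  have : max (p k - p m) 0 ≤ max (p j - p m) 0 := by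
    apply max_le_max (by linarith) le_rfl
  exact pow_le_pow_left₀ (le_max_right _ _) this 2

private lemma Wstrict {ι : Type*} [Fintype ι] (p : ι → ℝ) {j k : ι} (h : p k < p j) :
    (∑ m, (max (p k - p m) 0) ^ 2) < ∑ m, (max (p j - p m) 0) ^ 2 := by
  apply Finset.sum_lt_sum
  · intro m _
    have : max (p k - p m) 0 ≤ max (p j - p m) 0 := max_le_max (by linarith) le_rfl
    exact pow_le_pow_left₀ (le_max_right _ _) this 2
  · refine ⟨k, Finset.mem_univ k, ?_⟩
    have h1 : max (p k - p k) 0 = 0 := by simp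
    have h2 : 0 < max (p j - p k) 0 := lt_max_of_lt_left (by linarith)
    rw [h1]
    simpa using pow_pos h2 2


/-- With `W_j = Σ_k ((p_j - p_k)₊)²` (the partial derivative of the Lyapunov
function at constant prices), one has `Σ_j W_j Φ_j(X,p) ≤ 0`, with strict
inequality whenever `X` is not a Wardrop equilibrium. -/
theorem stmt6 {ι : Type*} [Fintype ι] (X p : ι → ℝ)
    (hX : ∀ j, 0 ≤ X j) :
    (∑ j, (∑ k, (max (p j - p k) 0) ^ 2) * Phi X p j ≤ 0) ∧
    ((∃ j k, 0 < X j ∧ p k < p j) →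
      ∑ j, (∑ k, (max (p j - p k) 0) ^ 2) * Phi X p j < 0) := by
  set W : ι → ℝ := fun j => ∑ k, (max (p j - p k) 0) ^ 2 with hW
  have key : ∑ j, W j * Phi X p j
      = ∑ j, ∑ k, X j * max (p j - p k) 0 * (W k - W j) := by
    have e1 : ∑ j, W j * Phi X p j
        = (∑ j, ∑ k, W j * (X k * max (p k - p j) 0))
          - ∑ j, ∑ k, W j * (X j * max (p j - p k) 0) := by
      simp [Phi, Finset.mul_sum, mul_sub, Finset.sum_sub_distrib]
    rw [e1, Finset.sum_comm (f := fun j k => W j * (X k * max (p k - p j) 0))]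
    rw [← Finset.sum_sub_distrib]
    apply Finset.sum_congr rfl
    intro j _
    rw [← Finset.sum_sub_distrib]
    apply Finset.sum_congr rfl
    intro k _
    ring
  have termle : ∀ j k : ι, X j * max (p j - p k) 0 * (W k - W j) ≤ 0 := by
    intro j k
    rcases le_or_gt (p j) (p k) with h | h
    · simp [max_eq_right (by linarith : p j - p k ≤ 0)]
    · apply mul_nonpos_of_nonneg_of_nonpos
      · exact mul_nonneg (hX j) (le_max_right _ _)
      · linarith [Wstrict p h]
  constructor
  · rw [key]
    apply Finset.sum_nonpos
    intro j _
    exact Finset.sum_nonpos fun k _ => termle j k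
  · rintro ⟨j, k, hXj, hpk⟩
    rw [key]
    have hlt : ∑ m, X j * max (p j - p m) 0 * (W m - W j) < 0 := by
      have := Finset.sum_lt_sum (f := fun m => X j * max (p j - p m) 0 * (W m - W j))
        (g := fun _ => (0:ℝ)) (fun m _ => termle j m) ⟨k, Finset.mem_univ k, by
          apply mul_neg_of_pos_of_neg
          · exact mul_pos hXj (lt_max_of_lt_left (by linarith))
          · linarith [Wstrict p hpk]⟩
      simpa using this
    have := Finset.sum_lt_sum (f := fun i => ∑ m, X i * max (p i - p m) 0 * (W m - W i))
      (g := fun _ => (0:ℝ))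
      (fun i _ => Finset.sum_nonpos fun m _ => termle i m)
      ⟨j, Finset.mem_univ j, hlt⟩
    simpa using this
end

section
/- Fix N ≥ 1 and identify the users with {0, 1, …, N}, where user N is a fictitious additional user. Let h be any real-valued function on subsets of {0, …, N−1} with h(∅) = 0 (h(S) represents the marginal contribution of the fictitious user when it arrives immediately after the set S of real users). Define the Shapley gradient G = (1/(N+1)!)·Σ_σ h(P(σ)), where σ ranges over all (N+1)! permutations of {0,…,N} and P(σ) is the set of users strictly preceding user N in σ, and define the per-user gradient φ'_i = (1/N!)·Σ_π h(S(π,i)), where π ranges over all N! permutations of {0,…,N−1} and S(π,i) is the set of users arriving not later than i in π. Then the mean of the per-user gradients satisfies (1/N)·Σ_{i=0}^{N−1} φ'_i = ((N+1)/N)·G; in particular the mean equals G up to an error of order 1/N. -/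
set_option maxRecDepth 10000

/-- Appendix A main result: with `h(S)` the marginal contribution of the
fictitious user `N` when arriving immediately after the set `S` of real users,
`h(∅) = 0`, the Shapley gradient `G = (1/(N+1)!) Σ_σ h(P(σ))` (over all
permutations of `{0,…,N}`, `P(σ)` the strict predecessors of user `N`) and the
per-user gradients `φ'_i = (1/N!) Σ_π h(S(π,i))` satisfy
`(1/N) Σ_i φ'_i = ((N+1)/N) G`. -/
theorem stmt11 (N : ℕ) (hN : 1 ≤ N) (h : Finset (Fin N) → ℝ) (h0 : h ∅ = 0)
    (G : ℝ)
    (hG : G = (1 / ((N + 1).factorial : ℝ)) *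
      ∑ σ : Equiv.Perm (Fin (N + 1)),
        h (Finset.univ.filter
          (fun i : Fin N => σ i.castSucc < σ (Fin.last N))))
    (φ' : Fin N → ℝ)
    (hφ : ∀ i, φ' i = (1 / (N.factorial : ℝ)) *
      ∑ π : Equiv.Perm (Fin N),
        h (Finset.univ.filter (fun j => π j ≤ π i))) :
    (1 / N : ℝ) * ∑ i, φ' i = ((N + 1 : ℝ) / N) * G := by
  classical
  -- the key combinatorial identity
  set E : (Option (Fin N) × Equiv.Perm (Fin N)) ≃ Equiv.Perm (Fin (N + 1)) :=
    Equiv.Perm.decomposeOption.symm.trans (finSuccEquivLast.symm.permCongr)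
  have hEapp : ∀ (q : Option (Fin N)) (π : Equiv.Perm (Fin N)) (x : Fin (N + 1)),
      E (q, π) x = finSuccEquivLast.symm
        (Equiv.swap none q (Option.map π (finSuccEquivLast x))) := by
    intro q π x
    simp only [E, Equiv.trans_apply, Equiv.permCongr_apply, Equiv.symm_symm,
      Equiv.Perm.decomposeOption_symm_apply, Equiv.Perm.mul_apply,
      Equiv.optionCongr_apply]
  -- per-permutation identity
  have perm_id : ∀ π : Equiv.Perm (Fin N),
      h Finset.univ + ∑ k : Fin N,
          h (Finset.univ.filter (fun j => (π j : ℕ) < (k : ℕ)))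
        = ∑ i : Fin N, h (Finset.univ.filter (fun j => π j ≤ π i)) := by
    intro π
    set F : ℕ → ℝ := fun n => h (Finset.univ.filter (fun j => (π j : ℕ) < n)) with hF
    have h1 : ∑ i : Fin N, h (Finset.univ.filter (fun j => π j ≤ π i))
        = ∑ k : Fin N, F ((k : ℕ) + 1) := by
      rw [← Equiv.sum_comp π (fun k => F ((k : ℕ) + 1))]
      refine Finset.sum_congr rfl fun i _ => ?_
      simp only [hF]
      congr 1
      refine Finset.filter_congr fun j _ => ?_
      rw [Fin.le_def]
      omega
    have h2 : h Finset.univ = F N := by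
      simp only [hF]
      congr 1
      refine (Finset.filter_eq_self.2 fun j _ => (π j).isLt).symm
    have h3 : ∀ k : Fin N, h (Finset.univ.filter (fun j => (π j : ℕ) < (k : ℕ)))
        = F (k : ℕ) := fun k => rfl
    have h4 : F 0 = 0 := by
      simp only [hF]
      simpa using h0
    rw [h1, h2]
    rw [Fin.sum_univ_eq_sum_range (fun n => F n), Fin.sum_univ_eq_sum_range (fun n => F (n + 1))]
    have e1 := Finset.sum_range_succ F N
    have e2 := Finset.sum_range_succ' F N
    linarith
  -- compute the sum over big permutations
  have key : (∑ σ : Equiv.Perm (Fin (N + 1)),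
        h (Finset.univ.filter
          (fun i : Fin N => σ i.castSucc < σ (Fin.last N))))
      = ∑ i : Fin N, ∑ π : Equiv.Perm (Fin N),
          h (Finset.univ.filter (fun j => π j ≤ π i)) := by
    rw [← Equiv.sum_comp E (fun σ : Equiv.Perm (Fin (N + 1)) =>
      h (Finset.univ.filter (fun i : Fin N => σ i.castSucc < σ (Fin.last N))))]
    rw [Fintype.sum_prod_type, Fintype.sum_option]
    have hnone : ∀ π : Equiv.Perm (Fin N),
        (Finset.univ.filter
          (fun i : Fin N => E (none, π) i.castSucc < E (none, π) (Fin.last N)))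
        = Finset.univ := by
      intro π
      refine Finset.filter_eq_self.2 fun i _ => ?_
      rw [hEapp, hEapp]
      simp only [Equiv.swap_self, Equiv.refl_apply, finSuccEquivLast_castSucc,
        finSuccEquivLast_last, Option.map_some, Option.map_none,
        finSuccEquivLast_symm_none, finSuccEquivLast_symm_some]
      exact Fin.castSucc_lt_last _
    have hsome : ∀ (k : Fin N) (π : Equiv.Perm (Fin N)),
        (Finset.univ.filter
          (fun i : Fin N => E (some k, π) i.castSucc < E (some k, π) (Fin.last N)))
        = Finset.univ.filter (fun j => (π j : ℕ) < (k : ℕ)) := by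
      intro k π
      refine Finset.filter_congr fun i _ => ?_
      rw [hEapp, hEapp]
      simp only [finSuccEquivLast_castSucc, finSuccEquivLast_last, Option.map_some,
        Option.map_none]
      rw [Equiv.swap_apply_left]
      by_cases hik : π i = k
      · subst hik
        rw [Equiv.swap_apply_right]
        simp only [finSuccEquivLast_symm_none, finSuccEquivLast_symm_some, Fin.lt_def,
          Fin.coe_castSucc, Fin.val_last]
        have := (π i).isLt
        omega
      · rw [Equiv.swap_apply_of_ne_of_ne (by simp) (by simpa using hik)]
        simp only [finSuccEquivLast_symm_some, Fin.lt_def, Fin.coe_castSucc]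
    calc (∑ π : Equiv.Perm (Fin N),
            h (Finset.univ.filter
              (fun i : Fin N => E (none, π) i.castSucc < E (none, π) (Fin.last N))))
          + ∑ k : Fin N, ∑ π : Equiv.Perm (Fin N),
            h (Finset.univ.filter
              (fun i : Fin N => E (some k, π) i.castSucc < E (some k, π) (Fin.last N)))
        = ∑ π : Equiv.Perm (Fin N), (h Finset.univ + ∑ k : Fin N,
            h (Finset.univ.filter (fun j => (π j : ℕ) < (k : ℕ)))) := by
          rw [Finset.sum_add_distrib]
          congr 1
          · exact Finset.sum_congr rfl fun π _ => by rw [hnone π]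
          · rw [Finset.sum_comm]
            exact Finset.sum_congr rfl fun π _ => Finset.sum_congr rfl fun k _ => by
              rw [hsome k π]
      _ = ∑ π : Equiv.Perm (Fin N), ∑ i : Fin N,
            h (Finset.univ.filter (fun j => π j ≤ π i)) := by
          exact Finset.sum_congr rfl fun π _ => perm_id π
      _ = _ := Finset.sum_comm
  -- now the arithmetic
  have hNfac : (N.factorial : ℝ) ≠ 0 := Nat.cast_ne_zero.2 N.factorial_ne_zero
  have hNne : (N : ℝ) ≠ 0 := Nat.cast_ne_zero.2 (by omega)
  have hfacsucc : ((N + 1).factorial : ℝ) = (N + 1) * N.factorial := by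
    rw [Nat.factorial_succ]; push_cast; ring
  rw [hG, key]
  simp only [hφ]
  rw [← Finset.mul_sum]
  field_simp
  rw [hfacsucc]
  ring
end

section
/- Let n ≥ 1 and 1 ≤ K ≤ n, let f : Fin n → ℝ be injective, let q be the K-th largest of the values f_1, …, f_n, and let j* be the unique index with f_{j*} = q. Then there exists δ > 0 such that for all du with 0 < du < δ: (i) the K-th largest value of the profile obtained from f by replacing f_{j*} with f_{j*} + du equals q + du; and (ii) for every index j ≠ j*, the K-th largest value of the profile obtained from f by replacing f_j with f_j + du equals q. -/
/-- `q` is the `K`-th largest of the values of `g`: fewer than `K` values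
strictly exceed `q`, while at least `K` values are at least `q`. -/
def IsKthLargest {n : ℕ} (g : Fin n → ℝ) (K : ℕ) (q : ℝ) : Prop :=
  (Finset.univ.filter (fun k => q < g k)).card < K ∧
  K ≤ (Finset.univ.filter (fun k => q ≤ g k)).card

/-- Adding a small amount `du` of traffic to the slot currently at the `K`-th
largest level raises the `K`-th largest value by `du`, while adding it to any
other slot leaves the `K`-th largest value unchanged. -/
theorem stmt13 (n K : ℕ) (hn : 1 ≤ n) (hK1 : 1 ≤ K) (hKn : K ≤ n)
    (f : Fin n → ℝ) (hf : Function.Injective f) (q : ℝ)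
    (jstar : Fin n) (hjstar : f jstar = q)
    (hq : IsKthLargest f K q) :
    ∃ δ > 0, ∀ du : ℝ, 0 < du → du < δ →
      IsKthLargest (Function.update f jstar (f jstar + du)) K (q + du) ∧
      ∀ j, j ≠ jstar →
        IsKthLargest (Function.update f j (f j + du)) K q := by
  classical
  have hne : ∀ k : Fin n, k ≠ jstar → f k ≠ q := by
    intro k hk h
    exact hk (hf (by rw [h, hjstar]))
  set s : Finset ℝ :=
    insert 1 ((Finset.univ.erase jstar).image fun k => |f k - q|) with hs
  have hsne : s.Nonempty := ⟨1, by simp [hs]⟩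
  refine ⟨s.min' hsne, ?_, ?_⟩
  · rw [gt_iff_lt, Finset.lt_min'_iff]
    intro y hy
    simp only [hs, Finset.mem_insert, Finset.mem_image, Finset.mem_erase,
      Finset.mem_univ, and_true] at hy
    rcases hy with rfl | ⟨k, hk, rfl⟩
    · norm_num
    · exact abs_pos.mpr (sub_ne_zero.mpr (hne k hk))
  · intro du hdu hlt
    have hδ : ∀ k, k ≠ jstar → du < |f k - q| := by
      intro k hk
      refine lt_of_lt_of_le hlt (Finset.min'_le _ _ ?_)
      simp only [hs, Finset.mem_insert, Finset.mem_image, Finset.mem_erase,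
        Finset.mem_univ, and_true]
      exact Or.inr ⟨k, hk, rfl⟩
    obtain ⟨h1, h2⟩ := hq
    constructor
    · constructor
      · have hA : (Finset.univ.filter
            (fun k => q + du < Function.update f jstar (f jstar + du) k)) =
            Finset.univ.filter (fun k => q < f k) := by
          ext k
          simp only [Finset.mem_filter, Finset.mem_univ, true_and]
          by_cases hk : k = jstar
          · subst hk
            simp [Function.update_self, hjstar, hdu]
          · rw [Function.update_of_ne hk]
            have h3 := hδ k hk
            constructor
            · intro h; linarith
            · intro h
              rw [abs_of_pos (by linarith)] at h3
              linarith
        rw [hA]; exact h1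
      · have hB : (Finset.univ.filter
            (fun k => q + du ≤ Function.update f jstar (f jstar + du) k)) =
            Finset.univ.filter (fun k => q ≤ f k) := by
          ext k
          simp only [Finset.mem_filter, Finset.mem_univ, true_and]
          by_cases hk : k = jstar
          · subst hk
            simp [Function.update_self, hjstar]
          · rw [Function.update_of_ne hk]
            have h3 := hδ k hk
            have h4 := hne k hk
            constructor
            · intro h; linarith
            · intro h
              have : q < f k := lt_of_le_of_ne h (Ne.symm h4)
              rw [abs_of_pos (by linarith)] at h3
              linarith
        rw [hB]; exact h2
    · intro j hj
      have h3 := hδ j hj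
      have h4 := hne j hj
      constructor
      · have hA : (Finset.univ.filter
            (fun k => q < Function.update f j (f j + du) k)) =
            Finset.univ.filter (fun k => q < f k) := by
          ext k
          simp only [Finset.mem_filter, Finset.mem_univ, true_and]
          by_cases hk : k = j
          · subst hk
            rw [Function.update_self]
            constructor
            · intro h
              by_contra h'
              push_neg at h'
              have : f k < q := lt_of_le_of_ne h' h4
              rw [abs_of_neg (by linarith)] at h3
              linarith
            · intro h; linarith
          · rw [Function.update_of_ne hk]
        rw [hA]; exact h1
      · have hB : (Finset.univ.filter
            (fun k => q ≤ Function.update f j (f j + du) k)) =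
            Finset.univ.filter (fun k => q ≤ f k) := by
          ext k
          simp only [Finset.mem_filter, Finset.mem_univ, true_and]
          by_cases hk : k = j
          · subst hk
            rw [Function.update_self]
            constructor
            · intro h
              by_contra h'
              push_neg at h'
              rw [abs_of_neg (by linarith)] at h3
              linarith
            · intro h; linarith
          · rw [Function.update_of_ne hk]
        rw [hB]; exact h2
end

section
/- Let n ≥ 1, let t : Fin n → ℝ, and let q ∈ ℝ be such that the set M = {k : t_k ≥ q} is nonempty. For σ > 0 define A_σ(j) = 1 if t_j > q, and A_σ(j) = exp(−(t_j − q)²/σ²) if t_j ≤ q. Then for every index j, the ratio A_σ(j)/Σ_{k} A_σ(k) tends, as σ → 0⁺, to 𝟙[t_j ≥ q] / |M|, i.e., to 1/|M| if t_j ≥ q and to 0 if t_j < q. -/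
open Filter Real

private lemma exp_aux (c : ℝ) (hc : 0 < c) :
    Tendsto (fun σ : ℝ => Real.exp (-c / σ ^ 2)) (nhdsWithin 0 (Set.Ioi 0)) (nhds 0) := by
  have hsq : Tendsto (fun σ : ℝ => σ ^ 2) (nhdsWithin 0 (Set.Ioi 0)) (nhdsWithin 0 (Set.Ioi 0)) := by
    apply tendsto_nhdsWithin_of_tendsto_nhds_of_eventually_within
    · simpa using ((continuous_pow 2).tendsto (0 : ℝ)).mono_left
        (nhdsWithin_le_nhds (s := Set.Ioi (0:ℝ)))
    · filter_upwards [self_mem_nhdsWithin] with σ hσ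
      exact pow_pos (Set.mem_Ioi.mp hσ) 2
  have htop : Tendsto (fun σ : ℝ => c * (σ ^ 2)⁻¹) (nhdsWithin 0 (Set.Ioi 0)) atTop :=
    hsq.inv_tendsto_nhdsGT_zero.const_mul_atTop hc
  have hbot : Tendsto (fun σ : ℝ => -c / σ ^ 2) (nhdsWithin 0 (Set.Ioi 0)) atBot :=
    (Filter.tendsto_neg_atBot_iff.2 htop).congr (fun σ => by ring)
  exact Real.tendsto_exp_atBot.comp hbot

/-- As `σ → 0⁺`, the smoothed weight ratio `A_σ(j) / Σ_k A_σ(k)`, with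
`A_σ(j) = 1` if `t_j > q` and `A_σ(j) = exp(-(t_j - q)²/σ²)` otherwise,
converges to the normalised indicator `𝟙[t_j ≥ q] / |{k : t_k ≥ q}|`. -/
theorem stmt14 (n : ℕ) (hn : 1 ≤ n) (t : Fin n → ℝ) (q : ℝ)
    (hM : (Finset.univ.filter (fun k => q ≤ t k)).Nonempty)
    (A : ℝ → Fin n → ℝ)
    (hA : ∀ σ j, A σ j =
      if q < t j then 1 else Real.exp (-(t j - q) ^ 2 / σ ^ 2)) :
    ∀ j, Filter.Tendsto (fun σ => A σ j / ∑ k, A σ k)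
      (nhdsWithin 0 (Set.Ioi 0))
      (nhds (if q ≤ t j then
        1 / ((Finset.univ.filter (fun k => q ≤ t k)).card : ℝ) else 0)) := by
  have hterm : ∀ k : Fin n, Tendsto (fun σ => A σ k) (nhdsWithin 0 (Set.Ioi 0))
      (nhds (if q ≤ t k then (1:ℝ) else 0)) := by
    intro k
    simp only [hA]
    rcases lt_trichotomy q (t k) with h | h | h
    · simp only [if_pos h, if_pos h.le]
      exact tendsto_const_nhds
    · have h1 : ¬ q < t k := by rw [h]; exact lt_irrefl _
      simp only [if_neg h1, if_pos h.le, ← h, sub_self]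
      norm_num
    · have h1 : ¬ q < t k := not_lt.2 h.le
      have h2 : ¬ q ≤ t k := not_le.2 h
      simp only [if_neg h1, if_neg h2]
      have hne : t k - q ≠ 0 := by linarith
      exact exp_aux ((t k - q) ^ 2) (by positivity)
  have hsum : Tendsto (fun σ => ∑ k, A σ k) (nhdsWithin 0 (Set.Ioi 0))
      (nhds ((Finset.univ.filter (fun k => q ≤ t k)).card : ℝ)) := by
    have h := tendsto_finset_sum Finset.univ (fun k (_ : k ∈ Finset.univ) => hterm k)
    convert h using 2
    rw [Finset.sum_ite, Finset.sum_const, Finset.sum_const]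
    simp
  have hcard : ((Finset.univ.filter (fun k => q ≤ t k)).card : ℝ) ≠ 0 := by
    simpa using Finset.card_ne_zero_of_mem hM.choose_spec
  intro j
  have h := (hterm j).div hsum hcard
  convert h using 2
  · rfl
  split <;> simp
end

section
/- Let C be a finite set, let q : (C → ℝ) → (C → ℝ) be any function assigning slot prices to traffic assignments, and let X : ℝ → (C → ℝ) be differentiable with X_j'(t) = Φ_j(X(t), q(X(t))) for all j ∈ C and all t. Then the total flow Σ_{j ∈ C} X_j(t) is constant in t; in particular, if the initial assignment is demand feasible with demand d (i.e., Σ_{j ∈ C} X_j(0) = d), then Σ_{j ∈ C} X_j(t) = d for all t. -/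
lemma sum_Phi_eq_zero {ι : Type*} [Fintype ι] (X p : ι → ℝ) :
    ∑ j, Phi X p j = 0 := by
  unfold Phi
  simp only [Finset.sum_sub_distrib]
  rw [Finset.sum_comm (f := fun j k => X k * max (p k - p j) 0)]
  ring

/-- Along any trajectory of the adjustment dynamics (with prices depending
arbitrarily on the current assignment) the total flow is constant; in
particular demand feasibility is preserved. -/
theorem stmt16 {ι : Type*} [Fintype ι]
    (q : (ι → ℝ) → (ι → ℝ)) (X : ℝ → ι → ℝ) (d : ℝ)
    (hX : ∀ (j : ι) (t : ℝ),
      HasDerivAt (fun s => X s j) (Phi (X t) (q (X t)) j) t) :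
    (∀ t₁ t₂, ∑ j, X t₁ j = ∑ j, X t₂ j) ∧
    ((∑ j, X 0 j = d) → ∀ t, ∑ j, X t j = d) := by
  have hF : ∀ t, HasDerivAt (fun s => ∑ j, X s j) 0 t := by
    intro t
    have := HasDerivAt.fun_sum (u := Finset.univ) (fun j _ => hX j t)
    rwa [sum_Phi_eq_zero] at this
  have hconst : ∀ t₁ t₂, ∑ j, X t₁ j = ∑ j, X t₂ j := by
    intro t₁ t₂
    have := is_const_of_deriv_eq_zero (f := fun s => ∑ j, X s j)
      (fun s => (hF s).differentiableAt) (fun s => (hF s).deriv) t₁ t₂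
    exact this
  exact ⟨hconst, fun h0 t => (hconst t 0).trans h0⟩
end
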